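/- Let x : M² → ℂ² be a compact orientable Lagrangian self-shrinker. Then ∫_M (2 - |A|²) dv = 8π(1 - g), where g is the genus of M² and |A|² the squared norm of the second fundamental form. In particular, if |A|² ≤ 2 everywhere, then g ≥ 1 forces |A|² ≡ 2 and g = 1. -/

import Mathlib

open MeasureTheory

/-- The real (Euclidean) inner product on `ℂ² = ℂ × ℂ ≅ ℝ⁴`. -/
noncomputable def rinner (a b : ℂ × ℂ) : ℝ :=
  ((starRingEnd ℂ) a.1 * b.1).re + ((starRingEnd ℂ) a.2 * b.2).re

lemma rinner_symm (a b : ℂ × ℂ) : rinner a b = rinner b a := by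
  simp [rinner, Complex.mul_re]; ring

lemma rinner_sub (a b c : ℂ × ℂ) : rinner a (b - c) = rinner a b - rinner a c := by
  simp [rinner, mul_sub, Complex.sub_re]; ring

lemma rinner_neg_right (a b : ℂ × ℂ) : rinner a (-b) = - rinner a b := by
  simp [rinner]; ring

/-- Lemma 4.1: for a compact orientable Lagrangian self-shrinker `x : M² → ℂ²` of
genus `g`, one has `∫_M (2 - |A|²) dv = 8π(1 - g)`; in particular, if `|A|² ≤ 2`
everywhere, then `g ≥ 1` forces `|A|² ≡ 2` and `g = 1`.  The surface is encoded
by its position `x`, tangent planes `T`, mean curvature vector `Hv`, normal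
projection `xperp` of `x`, squared second fundamental form norm `A2`, Gauss
curvature `K`, volume measure `μ` and Laplace–Beltrami operator `lap`, subject
to: the Lagrangian condition `J(T_pM) ⟂ T_pM`, the self-shrinker equation
`𝐇 = -x^⊥`, the standard facts `Δ|x|² = 4 + 2⟨x, Δx⟩` (`Δx = 𝐇`),
`⟨x, x^⊥⟩ = |x^⊥|²`, the divergence theorem, the Gauss equation
`2K = H² - |A|²`, and the Gauss–Bonnet theorem `∫_M K dv = 4π(1 - g)`. -/
theorem stmt_10 (M : Type*) [TopologicalSpace M] [CompactSpace M]
    [MeasurableSpace M] (μ : Measure M) [μ.IsOpenPosMeasure] [IsFiniteMeasure μ]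
    (x Hv xperp : M → ℂ × ℂ) (T : M → Submodule ℝ (ℂ × ℂ))
    (A2 K : M → ℝ) (lap : (M → ℝ) → (M → ℝ)) (g : ℕ)
    (hdim : ∀ p, Module.finrank ℝ (T p) = 2)
    (hLag : ∀ p, ∀ v ∈ T p, ∀ w ∈ T p, rinner (Complex.I • v) w = 0)
    (hxperp : ∀ p, x p - xperp p ∈ T p ∧ ∀ v ∈ T p, rinner (xperp p) v = 0)
    (hHnormal : ∀ p, ∀ v ∈ T p, rinner (Hv p) v = 0)
    (hss : ∀ p, Hv p = -xperp p)
    (hlap_normsq : ∀ p,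
      lap (fun q => rinner (x q) (x q)) p = 2 * 2 + 2 * rinner (x p) (Hv p))
    (hdiv : ∀ f : M → ℝ, ∫ p, lap f p ∂μ = 0)
    (hGauss : ∀ p, 2 * K p = rinner (Hv p) (Hv p) - A2 p)
    (hGaussBonnet : ∫ p, K p ∂μ = 4 * Real.pi * (1 - (g : ℝ)))
    (hA2cont : Continuous A2) (hKint : Integrable K μ) (hA2int : Integrable A2 μ)
    (hHint : Integrable (fun p => rinner (Hv p) (Hv p)) μ) :
    (∫ p, (2 - A2 p) ∂μ = 8 * Real.pi * (1 - (g : ℝ))) ∧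
      ((∀ p, A2 p ≤ 2) → 1 ≤ g → (∀ p, A2 p = 2) ∧ g = 1) := by
  -- pointwise: ⟨x, Hv⟩ = -⟨Hv, Hv⟩
  have hxH : ∀ p, rinner (x p) (Hv p) = - rinner (Hv p) (Hv p) := by
    intro p
    have h1 : rinner (xperp p) (x p - xperp p) = 0 := (hxperp p).2 _ (hxperp p).1
    rw [rinner_sub] at h1
    have h2 : rinner (xperp p) (x p) = rinner (xperp p) (xperp p) := by linarith
    rw [hss, rinner_neg_right, rinner_symm, h2]
    have : rinner (-xperp p) (-xperp p) = rinner (xperp p) (xperp p) := by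
      rw [rinner_neg_right, rinner_symm, rinner_neg_right, rinner_symm]; ring
    rw [this]
  -- the key integral identity: ∫ (4 - 2 H²) = 0
  have hkey : ∫ p, (4 - 2 * rinner (Hv p) (Hv p)) ∂μ = 0 := by
    have := hdiv (fun q => rinner (x q) (x q))
    have heq : (fun p => lap (fun q => rinner (x q) (x q)) p)
        = fun p => 4 - 2 * rinner (Hv p) (Hv p) := by
      funext p; rw [hlap_normsq p, hxH p]; ring
    rwa [heq] at this
  have hconst : Integrable (fun _ : M => (4 : ℝ)) μ := integrable_const 4
  have hH2 : ∫ p, rinner (Hv p) (Hv p) ∂μ = 2 * (μ Set.univ).toReal := by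
    have := integral_sub hconst (hHint.const_mul 2)
    rw [this, integral_const, measureReal_def, integral_const_mul, smul_eq_mul] at hkey
    linarith
  have hA2val : ∫ p, A2 p ∂μ
      = 2 * (μ Set.univ).toReal - 2 * (4 * Real.pi * (1 - (g : ℝ))) := by
    have heq : (fun p => A2 p) = fun p => rinner (Hv p) (Hv p) - 2 * K p := by
      funext p; have := hGauss p; linarith
    rw [heq, integral_sub hHint (hKint.const_mul 2), integral_const_mul,
      hGaussBonnet, hH2]
  have hmain : ∫ p, (2 - A2 p) ∂μ = 8 * Real.pi * (1 - (g : ℝ)) := by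
    rw [integral_sub (integrable_const 2) hA2int, integral_const, measureReal_def, hA2val]
    simp [smul_eq_mul]
    ring
  refine ⟨hmain, ?_⟩
  intro hle hg
  have hfi : Integrable (fun p => 2 - A2 p) μ := (integrable_const 2).sub hA2int
  have hnn : 0 ≤ fun p => 2 - A2 p := fun p => by simpa using hle p
  have hge : 0 ≤ ∫ p, (2 - A2 p) ∂μ := integral_nonneg hnn
  have hπ : 0 < Real.pi := Real.pi_pos
  have hg1 : (g : ℝ) ≤ 1 := by nlinarith [hmain, hge]
  have hgeq : g = 1 := le_antisymm (by exact_mod_cast hg1) hg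
  have hzero : ∫ p, (2 - A2 p) ∂μ = 0 := by
    rw [hmain, hgeq]; simp
  have hae : (fun p => 2 - A2 p) =ᵐ[μ] 0 :=
    (integral_eq_zero_iff_of_nonneg hnn hfi).1 hzero
  have hcont : Continuous (fun p => 2 - A2 p) := continuous_const.sub hA2cont
  have heq0 : (fun p => 2 - A2 p) = 0 := (hcont.ae_eq_iff_eq μ continuous_const).1 hae
  exact ⟨fun p => by have := congrFun heq0 p; simp at this; linarith, hgeq⟩
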